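/- For fixed y in [0,1) and r in (0,1], the function μ ↦ M_B(μ − r(μ − y), μ) is non-increasing with respect to μ on the interval (y, 1). -/

import Mathlib

noncomputable def MB (z θ : ℝ) : ℝ :=
  z * Real.log (θ / z) + (1 - z) * Real.log ((1 - θ) / (1 - z))

/-- For fixed `y ∈ [0,1)` and `r ∈ (0,1]`, the map `μ ↦ M_B(μ − r(μ − y), μ)`
is non-increasing on `(y, 1)`. -/
theorem mb_shift_antitone (y r : ℝ) (hy0 : 0 ≤ y) (hy1 : y < 1)
    (hr0 : 0 < r) (hr1 : r ≤ 1) :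
    AntitoneOn (fun μ : ℝ => MB (μ - r * (μ - y)) μ) (Set.Ioo y 1) := by
  by_cases hdeg : r = 1 ∧ y = 0
  · -- degenerate case : z ≡ 0
    obtain ⟨hr, hy⟩ := hdeg
    subst hr; subst hy
    intro a ha b hb hab
    simp only [MB, sub_zero, one_mul, sub_sub_cancel]
    have h0 : (0:ℝ) * Real.log (b / 0) = 0 := by ring
    have h0' : (0:ℝ) * Real.log (a / 0) = 0 := by ring
    rw [show a - a = 0 by ring, show b - b = 0 by ring, h0, h0']
    simp only [sub_zero, div_one, zero_add, one_mul]
    exact Real.log_le_log (by linarith [hb.2]) (by linarith)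
  · -- main case : z > 0 on the set
    push_neg at hdeg
    set c : ℝ := 1 - r with hc
    have hc0 : 0 ≤ c := by simp only [hc]; linarith
    have hc1 : c ≤ 1 := by simp only [hc]; linarith
    -- basic bounds
    have hbounds : ∀ μ ∈ Set.Ioo y 1, 0 < μ - r * (μ - y) ∧ μ - r * (μ - y) < 1 ∧
        0 < μ ∧ μ < 1 ∧ μ - r * (μ - y) ≤ μ ∧ c * μ ≤ μ - r * (μ - y) := by
      intro μ hμ
      obtain ⟨hμy, hμ1⟩ := hμ
      have hμ0 : 0 < μ := lt_of_le_of_lt hy0 hμy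
      have hd : 0 < r * (μ - y) := mul_pos hr0 (by linarith)
      have hz0 : 0 < μ - r * (μ - y) := by
        rcases lt_or_eq_of_le hr1 with h | h
        · nlinarith
        · rcases lt_or_eq_of_le hy0 with h' | h'
          · nlinarith
          · exact absurd h'.symm (hdeg h)
      refine ⟨hz0, by linarith, hμ0, hμ1, by linarith, ?_⟩
      have hry : 0 ≤ r * y := mul_nonneg hr0.le hy0
      simp only [hc]; nlinarith
    -- the smooth version of the function
    set g : ℝ → ℝ := fun μ =>
      (μ - r * (μ - y)) * Real.log μ - (μ - r * (μ - y)) * Real.log (μ - r * (μ - y)) +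
        (1 - (μ - r * (μ - y))) * Real.log (1 - μ) -
        (1 - (μ - r * (μ - y))) * Real.log (1 - (μ - r * (μ - y))) with hg
    have heq : Set.EqOn (fun μ : ℝ => MB (μ - r * (μ - y)) μ) g (Set.Ioo y 1) := by
      intro μ hμ
      obtain ⟨hz0, hz1, hμ0, hμ1, -, -⟩ := hbounds μ hμ
      simp only [MB, hg]
      rw [Real.log_div hμ0.ne' hz0.ne',
        Real.log_div (by linarith : (1:ℝ) - μ ≠ 0) (by linarith : (1:ℝ) - (μ - r * (μ - y)) ≠ 0)]
      ring
    have hderiv : ∀ μ ∈ Set.Ioo y 1, HasDerivAt g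
        (c * Real.log μ + (μ - r * (μ - y)) * (1 / μ) -
          (c * Real.log (μ - r * (μ - y)) + (μ - r * (μ - y)) * (c / (μ - r * (μ - y)))) +
          ((-c) * Real.log (1 - μ) + (1 - (μ - r * (μ - y))) * (-1 / (1 - μ))) -
          ((-c) * Real.log (1 - (μ - r * (μ - y))) +
            (1 - (μ - r * (μ - y))) * (-c / (1 - (μ - r * (μ - y)))))) μ := by
      intro μ hμ
      obtain ⟨hz0, hz1, hμ0, hμ1, -, -⟩ := hbounds μ hμ
      have hz : HasDerivAt (fun μ : ℝ => μ - r * (μ - y)) c μ := by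
        have : HasDerivAt (fun μ : ℝ => μ - r * (μ - y)) (1 - r * 1) μ :=
          (hasDerivAt_id μ).sub (((hasDerivAt_id μ).sub_const y).const_mul r)
        simpa [hc] using this
      have h1z : HasDerivAt (fun μ : ℝ => 1 - (μ - r * (μ - y))) (-c) μ := by
        simpa using hz.const_sub (1:ℝ)
      have hlogμ : HasDerivAt (fun μ : ℝ => Real.log μ) (1 / μ) μ := by
        simpa [one_div] using Real.hasDerivAt_log hμ0.ne'
      have hlogz : HasDerivAt (fun μ : ℝ => Real.log (μ - r * (μ - y)))
          (c / (μ - r * (μ - y))) μ := hz.log hz0.ne'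
      have h1μ : HasDerivAt (fun μ : ℝ => 1 - μ) (-1) μ := by
        simpa using (hasDerivAt_id μ).const_sub (1:ℝ)
      have hlog1μ : HasDerivAt (fun μ : ℝ => Real.log (1 - μ)) (-1 / (1 - μ)) μ :=
        h1μ.log (by linarith)
      have hlog1z : HasDerivAt (fun μ : ℝ => Real.log (1 - (μ - r * (μ - y))))
          (-c / (1 - (μ - r * (μ - y)))) μ := h1z.log (by linarith)
      exact (((hz.mul hlogμ).sub (hz.mul hlogz)).add (h1z.mul hlog1μ)).sub (h1z.mul hlog1z)
    have hanti : AntitoneOn g (Set.Ioo y 1) := by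
      apply antitoneOn_of_deriv_nonpos (convex_Ioo y 1)
      · intro μ hμ
        exact ((hderiv μ hμ).continuousAt).continuousWithinAt
      · rw [interior_Ioo]
        intro μ hμ
        exact ((hderiv μ hμ).differentiableAt).differentiableWithinAt
      · rw [interior_Ioo]
        intro μ hμ
        rw [(hderiv μ hμ).deriv]
        obtain ⟨hz0, hz1, hμ0, hμ1, hzμ, hcz⟩ := hbounds μ hμ
        set z : ℝ := μ - r * (μ - y) with hzdef
        clear_value z
        have hμ1' : (0:ℝ) < 1 - μ := by linarith
        have hz1' : (0:ℝ) < 1 - z := by linarith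
        -- key log inequalities
        have hA : Real.log μ - Real.log z ≤ (μ - z) / z := by
          have h := Real.log_le_sub_one_of_pos (show 0 < μ / z from div_pos hμ0 hz0)
          rw [Real.log_div hμ0.ne' hz0.ne'] at h
          have hrw : μ / z - 1 = (μ - z) / z := by field_simp
          linarith
        have hB : Real.log (1 - z) - Real.log (1 - μ) ≤ (μ - z) / (1 - μ) := by
          have h := Real.log_le_sub_one_of_pos (div_pos hz1' hμ1')
          rw [Real.log_div hz1'.ne' hμ1'.ne'] at h
          have hrw : (1 - z) / (1 - μ) - 1 = (μ - z) / (1 - μ) := by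
            field_simp
            ring
          linarith
        have h5 : c * ((μ - z) / z) ≤ (μ - z) / μ := by
          rw [mul_div_assoc', div_le_div_iff₀ hz0 hμ0]
          nlinarith [mul_le_mul_of_nonneg_left hcz (sub_nonneg.2 hzμ)]
        have h6 : c * ((μ - z) / (1 - μ)) ≤ (μ - z) / (1 - μ) := by
          have h : 0 ≤ (μ - z) / (1 - μ) := div_nonneg (by linarith) (by linarith)
          nlinarith
        have h7 : z * (1 / μ) + (1 - z) * (-1 / (1 - μ)) =
            -((μ - z) / μ) - (μ - z) / (1 - μ) := by
          field_simp
          ring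
        have h8 : z * (c / z) = c := by field_simp
        have h9 : (1 - z) * (-c / (1 - z)) = -c := by
          field_simp
        have hmulA : c * Real.log μ - c * Real.log z ≤ c * ((μ - z) / z) := by
          have h := mul_le_mul_of_nonneg_left hA hc0
          rw [mul_sub] at h
          linarith
        have hmulB : c * Real.log (1 - z) - c * Real.log (1 - μ) ≤ c * ((μ - z) / (1 - μ)) := by
          have h := mul_le_mul_of_nonneg_left hB hc0
          rw [mul_sub] at h
          linarith
        rw [h8, h9]
        linarith
    exact hanti.congr heq.symm
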